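/- Equivalence of Stein operators in expectation: under the null, E[Δ ω(T) λ_C(T)] = E[(1−Δ) ω(T) λ_0(T)], where λ_C = f_C/S_C and λ_0 = f_0/S_0. -/

import Mathlib

open MeasureTheory Set ProbabilityTheory
open scoped ENNReal NNReal

/-- Under the null, `E[Δ ω(T) λ_C(T)] = E[(1−Δ) ω(T) λ₀(T)]`. -/
theorem stein_operators_equiv_in_expectation {Ω : Type*} [MeasureSpace Ω]
    [IsProbabilityMeasure (ℙ : Measure Ω)]
    (X C : Ω → ℝ) (f0 fC S0 SC lam0 lamC w : ℝ → ℝ)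
    (hXm : Measurable X) (hCm : Measurable C)
    (hindep : IndepFun X C ℙ)
    (hf0c : Continuous f0) (hfCc : Continuous fC)
    (hf0nn : ∀ x, 0 ≤ f0 x) (hfCnn : ∀ x, 0 ≤ fC x)
    (hXnn : ∀ ω, 0 ≤ X ω) (hCnn : ∀ ω, 0 ≤ C ω)
    (hfX : Measure.map X ℙ = volume.withDensity (fun x => ENNReal.ofReal (f0 x)))
    (hfC : Measure.map C ℙ = volume.withDensity (fun x => ENNReal.ofReal (fC x)))
    (hS0 : ∀ s, S0 s = (ℙ {ω | s < X ω}).toReal)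
    (hSC : ∀ s, SC s = (ℙ {ω | s < C ω}).toReal)
    (hS0pos : ∀ s, 0 ≤ s → 0 < S0 s) (hSCpos : ∀ s, 0 ≤ s → 0 < SC s)
    (hlam0 : ∀ x, lam0 x = f0 x / S0 x)
    (hlamC : ∀ x, lamC x = fC x / SC x)
    (hwm : Measurable w) (M : ℝ) (hwb : ∀ x, |w x| ≤ M)
    (hint1 : Integrable (fun ω => (if X ω ≤ C ω then (1:ℝ) else 0) *
      w (min (X ω) (C ω)) * lamC (min (X ω) (C ω))) ℙ)
    (hint2 : Integrable (fun ω => (1 - if X ω ≤ C ω then (1:ℝ) else 0) *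
      w (min (X ω) (C ω)) * lam0 (min (X ω) (C ω))) ℙ) :
    ∫ ω, (if X ω ≤ C ω then (1:ℝ) else 0) *
        w (min (X ω) (C ω)) * lamC (min (X ω) (C ω)) ∂ℙ
      = ∫ ω, (1 - if X ω ≤ C ω then (1:ℝ) else 0) *
        w (min (X ω) (C ω)) * lam0 (min (X ω) (C ω)) ∂ℙ := by
  classical
  set μX := Measure.map X ℙ with hmuX
  set μC := Measure.map C ℙ with hmuC
  have hμXprob : IsProbabilityMeasure μX := Measure.isProbabilityMeasure_map hXm.aemeasurable
  have hμCprob : IsProbabilityMeasure μC := Measure.isProbabilityMeasure_map hCm.aemeasurable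
  -- measurability of survival / hazard functions
  have hS0m : Measurable S0 := by
    have hanti : Antitone S0 := by
      intro a b hab
      rw [hS0, hS0]
      exact ENNReal.toReal_mono (measure_ne_top _ _)
        (measure_mono (fun ω hω => lt_of_le_of_lt hab hω))
    exact hanti.measurable
  have hSCm : Measurable SC := by
    have hanti : Antitone SC := by
      intro a b hab
      rw [hSC, hSC]
      exact ENNReal.toReal_mono (measure_ne_top _ _)
        (measure_mono (fun ω hω => lt_of_le_of_lt hab hω))
    exact hanti.measurable
  have hlam0m : Measurable lam0 := by
    have : lam0 = fun x => f0 x / S0 x := funext hlam0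
    rw [this]; exact hf0c.measurable.div hS0m
  have hlamCm : Measurable lamC := by
    have : lamC = fun x => fC x / SC x := funext hlamC
    rw [this]; exact hfCc.measurable.div hSCm
  -- the joint law is the product law
  have hmap : Measure.map (fun ω => (X ω, C ω)) ℙ = μX.prod μC :=
    (indepFun_iff_map_prod_eq_prod_map_map hXm.aemeasurable hCm.aemeasurable).mp hindep
  have hpairm : Measurable (fun ω => (X ω, C ω)) := hXm.prodMk hCm
  -- the two integrands as functions on ℝ × ℝ
  set G1 : ℝ × ℝ → ℝ := fun p =>
    (if p.1 ≤ p.2 then (1:ℝ) else 0) * w (min p.1 p.2) * lamC (min p.1 p.2) with hG1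
  set G2 : ℝ × ℝ → ℝ := fun p =>
    (1 - if p.1 ≤ p.2 then (1:ℝ) else 0) * w (min p.1 p.2) * lam0 (min p.1 p.2) with hG2
  have hminm : Measurable (fun p : ℝ × ℝ => min p.1 p.2) :=
    measurable_fst.min measurable_snd
  have hindm : Measurable (fun p : ℝ × ℝ => if p.1 ≤ p.2 then (1:ℝ) else 0) :=
    Measurable.ite (measurableSet_le measurable_fst measurable_snd) measurable_const measurable_const
  have hG1m : Measurable G1 :=
    (hindm.mul (hwm.comp hminm)).mul (hlamCm.comp hminm)
  have hG2m : Measurable G2 :=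
    ((measurable_const.sub hindm).mul (hwm.comp hminm)).mul (hlam0m.comp hminm)
  -- transfer to the product space
  have hI1 : Integrable G1 (μX.prod μC) := by
    rw [← hmap]
    exact (integrable_map_measure hG1m.aestronglyMeasurable hpairm.aemeasurable).mpr hint1
  have hI2 : Integrable G2 (μX.prod μC) := by
    rw [← hmap]
    exact (integrable_map_measure hG2m.aestronglyMeasurable hpairm.aemeasurable).mpr hint2
  have hL : ∫ ω, (if X ω ≤ C ω then (1:ℝ) else 0) *
      w (min (X ω) (C ω)) * lamC (min (X ω) (C ω)) ∂ℙ = ∫ p, G1 p ∂(μX.prod μC) := by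
    rw [← hmap, integral_map hpairm.aemeasurable hG1m.aestronglyMeasurable]
  have hR : ∫ ω, (1 - if X ω ≤ C ω then (1:ℝ) else 0) *
      w (min (X ω) (C ω)) * lam0 (min (X ω) (C ω)) ∂ℙ = ∫ p, G2 p ∂(μX.prod μC) := by
    rw [← hmap, integral_map hpairm.aemeasurable hG2m.aestronglyMeasurable]
  -- laws have no atoms and are supported on [0, ∞)
  have hacX : μX ≪ (volume : Measure ℝ) := by
    rw [hfX]; exact withDensity_absolutelyContinuous _ _
  have hacC : μC ≪ (volume : Measure ℝ) := by
    rw [hfC]; exact withDensity_absolutelyContinuous _ _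
  have hXatom : ∀ x : ℝ, μX {x} = 0 := fun x => hacX (measure_singleton x)
  have hCatom : ∀ x : ℝ, μC {x} = 0 := fun x => hacC (measure_singleton x)
  have haeX : ∀ᵐ x ∂μX, 0 ≤ x := by
    rw [ae_iff]
    have : {x : ℝ | ¬ 0 ≤ x} = Set.Iio 0 := by ext x; simp [not_le]
    rw [this, hmuX, Measure.map_apply hXm measurableSet_Iio]
    have : X ⁻¹' Set.Iio 0 = ∅ :=
      Set.eq_empty_iff_forall_notMem.mpr fun ω h => (not_lt.mpr (hXnn ω)) h
    rw [this, measure_empty]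
  have haeC : ∀ᵐ c ∂μC, 0 ≤ c := by
    rw [ae_iff]
    have : {x : ℝ | ¬ 0 ≤ x} = Set.Iio 0 := by ext x; simp [not_le]
    rw [this, hmuC, Measure.map_apply hCm measurableSet_Iio]
    have : C ⁻¹' Set.Iio 0 = ∅ :=
      Set.eq_empty_iff_forall_notMem.mpr fun ω h => (not_lt.mpr (hCnn ω)) h
    rw [this, measure_empty]
  -- survival functions via the laws
  have hSCmeas : ∀ x : ℝ, (μC (Set.Ici x)).toReal = SC x := by
    intro x
    have h1 : μC (Set.Ici x) = μC (Set.Ioi x) := by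
      refine le_antisymm ?_ (measure_mono Set.Ioi_subset_Ici_self)
      calc μC (Set.Ici x) ≤ μC ({x} ∪ Set.Ioi x) := by
            refine measure_mono fun c hc => ?_
            rcases eq_or_lt_of_le (Set.mem_Ici.mp hc) with h | h
            · exact Or.inl (by simp [h.symm])
            · exact Or.inr h
        _ ≤ μC {x} + μC (Set.Ioi x) := measure_union_le _ _
        _ = μC (Set.Ioi x) := by rw [hCatom x, zero_add]
    rw [h1, hmuC, Measure.map_apply hCm measurableSet_Ioi, hSC]
    rfl
  have hS0meas : ∀ x : ℝ, (μX (Set.Ioi x)).toReal = S0 x := by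
    intro x
    rw [hmuX, Measure.map_apply hXm measurableSet_Ioi, hS0]
    rfl
  -- Fubini for the left side
  have hL2 : ∫ p, G1 p ∂(μX.prod μC) = ∫ x, w x * fC x ∂μX := by
    rw [MeasureTheory.integral_prod _ hI1]
    refine integral_congr_ae ?_
    filter_upwards [haeX] with x hx
    have hfun : (fun c => G1 (x, c)) =
        Set.indicator (Set.Ici x) (fun _ => w x * lamC x) := by
      funext c
      by_cases h : x ≤ c
      · simp [hG1, h, min_eq_left h, Set.indicator_of_mem (Set.mem_Ici.mpr h)]
      · simp [hG1, h, Set.indicator_of_notMem (fun hc => h hc)]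
    rw [hfun, integral_indicator_const _ measurableSet_Ici, measureReal_def, hSCmeas x, smul_eq_mul,
      hlamC x]
    have hne : SC x ≠ 0 := ne_of_gt (hSCpos x hx)
    field_simp
  -- Fubini for the right side
  have hR2 : ∫ p, G2 p ∂(μX.prod μC) = ∫ c, w c * f0 c ∂μC := by
    rw [MeasureTheory.integral_prod_symm _ hI2]
    refine integral_congr_ae ?_
    filter_upwards [haeC] with c hc
    have hfun : (fun x => G2 (x, c)) =
        Set.indicator (Set.Ioi c) (fun _ => w c * lam0 c) := by
      funext x
      by_cases h : x ≤ c
      · simp [hG2, h, Set.indicator_of_notMem (fun hx => absurd h (not_le.mpr hx))]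
      · have hcx : c < x := not_le.mp h
        simp [hG2, h, min_eq_right (le_of_lt hcx),
          Set.indicator_of_mem (Set.mem_Ioi.mpr hcx)]
    rw [hfun, integral_indicator_const _ measurableSet_Ioi, measureReal_def, hS0meas c, smul_eq_mul,
      hlam0 c]
    have hne : S0 c ≠ 0 := ne_of_gt (hS0pos c hc)
    field_simp
  -- convert to Lebesgue integrals
  have hdensX : ∫ x, w x * fC x ∂μX = ∫ x, f0 x * (w x * fC x) := by
    rw [hfX]
    have : (fun x : ℝ => ENNReal.ofReal (f0 x)) =
        (fun x : ℝ => ((f0 x).toNNReal : ℝ≥0∞)) := by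
      funext x; rfl
    rw [this, integral_withDensity_eq_integral_smul
      (hf0c.measurable.real_toNNReal) (fun x => w x * fC x)]
    refine integral_congr_ae (Filter.Eventually.of_forall fun x => ?_)
    simp [NNReal.smul_def, Real.coe_toNNReal _ (hf0nn x)]
  have hdensC : ∫ c, w c * f0 c ∂μC = ∫ c, fC c * (w c * f0 c) := by
    rw [hfC]
    have : (fun x : ℝ => ENNReal.ofReal (fC x)) =
        (fun x : ℝ => ((fC x).toNNReal : ℝ≥0∞)) := by
      funext x; rfl
    rw [this, integral_withDensity_eq_integral_smul
      (hfCc.measurable.real_toNNReal) (fun c => w c * f0 c)]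
    refine integral_congr_ae (Filter.Eventually.of_forall fun x => ?_)
    simp [NNReal.smul_def, Real.coe_toNNReal _ (hfCnn x)]
  rw [hL, hR, hL2, hR2, hdensX, hdensC]
  refine integral_congr_ae (Filter.Eventually.of_forall fun x => ?_)
  ring
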